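/- Let B be an R-module with bounded S-torsion, i.e., there exists r ∈ S with r·Γ_S(B) = 0. Then: (d) the natural map λ_{S,B} induces an isomorphism Γ_S(B) ≅ Γ_S(Λ_S(B)); (e) there is a short exact sequence 0 → Γ_S(B) → Λ_S(B) → Λ_S(B/Γ_S(B)) → 0. -/
import Mathlib


open Submodule

/-- The submodule `s·A` of an `R`-module `A`. -/
def smulTop (R : Type) [CommRing R] (s : R)
    (A : Type) [AddCommGroup A] [Module R A] : Submodule R A :=
  Ideal.span {s} • (⊤ : Submodule R A)

/-- The natural projection `A/tA → A/sA` when `s ∣ t`. -/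
def transMap (R : Type) [CommRing R]
    (A : Type) [AddCommGroup A] [Module R A] (s t : R) (h : s ∣ t) :
    (A ⧸ smulTop R t A) →ₗ[R] A ⧸ smulTop R s A :=
  Submodule.mapQ _ _ LinearMap.id (by
    rw [Submodule.comap_id]
    exact Submodule.smul_mono (Ideal.span_singleton_le_span_singleton.mpr h) le_rfl)

/-- The S-completion `Λ_S(A) = lim_{s ∈ S} A/sA`, realized as the submodule of compatible
families in `∏_{s ∈ S} A/sA`. -/
def sCompletion (R : Type) [CommRing R] (S : Submonoid R)
    (A : Type) [AddCommGroup A] [Module R A] :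
    Submodule R (∀ s : S, A ⧸ smulTop R (s : R) A) where
  carrier := {x | ∀ (s t : S) (h : (s : R) ∣ (t : R)), transMap R A s t h (x t) = x s}
  add_mem' := by
    intro x y hx hy s t h
    rw [Pi.add_apply, Pi.add_apply, map_add, hx s t h, hy s t h]
  zero_mem' := by
    intro s t h
    rw [Pi.zero_apply, Pi.zero_apply, map_zero]
  smul_mem' := by
    intro r x hx s t h
    rw [Pi.smul_apply, Pi.smul_apply, map_smul, hx s t h]

theorem mem_sCompletion (R : Type) [CommRing R] (S : Submonoid R)
    (A : Type) [AddCommGroup A] [Module R A]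
    (x : ∀ s : S, A ⧸ smulTop R (s : R) A) :
    x ∈ sCompletion R S A ↔
      ∀ (s t : S) (h : (s : R) ∣ (t : R)), transMap R A s t h (x t) = x s :=
  Iff.rfl

/-- The natural map `λ_{S,A} : A → Λ_S(A)`. -/
def lamMap (R : Type) [CommRing R] (S : Submonoid R)
    (A : Type) [AddCommGroup A] [Module R A] :
    A →ₗ[R] sCompletion R S A :=
  LinearMap.codRestrict (sCompletion R S A)
    (LinearMap.pi fun s : S => (smulTop R (s : R) A).mkQ)
    (by
      intro a s t h
      show transMap R A s t h ((smulTop R (t : R) A).mkQ a) = (smulTop R (s : R) A).mkQ a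
      simp only [transMap, Submodule.mkQ_apply, Submodule.mapQ_apply, LinearMap.id_apply])

/-- The map `A/sA → B/sB` induced by `f : A → B`. -/
def quotMapF (R : Type) [CommRing R]
    (A B : Type) [AddCommGroup A] [Module R A] [AddCommGroup B] [Module R B]
    (f : A →ₗ[R] B) (s : R) :
    (A ⧸ smulTop R s A) →ₗ[R] B ⧸ smulTop R s B :=
  Submodule.mapQ _ _ f (by
    rw [← Submodule.map_le_iff_le_comap, smulTop, Submodule.map_smul'']
    exact Submodule.smul_mono le_rfl le_top)

/-- The map `Λ_S(A) → Λ_S(B)` induced by `f : A → B`. -/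
def sCompletionMap (R : Type) [CommRing R] (S : Submonoid R)
    (A B : Type) [AddCommGroup A] [Module R A] [AddCommGroup B] [Module R B]
    (f : A →ₗ[R] B) :
    sCompletion R S A →ₗ[R] sCompletion R S B :=
  LinearMap.codRestrict (sCompletion R S B)
    ((LinearMap.pi fun s : S => (quotMapF R A B f (s : R)).comp (LinearMap.proj s)).comp
      (sCompletion R S A).subtype)
    (by
      rintro ⟨x, hx⟩ s t h
      obtain ⟨a, ha⟩ := Submodule.mkQ_surjective (smulTop R (t : R) A) (x t)
      have hs : x s = Submodule.Quotient.mk a := by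
        rw [← hx s t h, ← ha]
        simp only [transMap, Submodule.mkQ_apply, Submodule.mapQ_apply, LinearMap.id_apply]
      show transMap R B s t h (quotMapF R A B f (t : R) (x t)) = quotMapF R A B f (s : R) (x s)
      rw [← ha, hs]
      simp only [transMap, quotMapF, Submodule.mkQ_apply, Submodule.mapQ_apply,
        LinearMap.id_apply])


section Helpers

lemma mem_smulTop {R : Type} [CommRing R] {s : R}
    {A : Type} [AddCommGroup A] [Module R A] {x : A} :
    x ∈ smulTop R s A ↔ ∃ b : A, s • b = x := by
  rw [smulTop, Submodule.ideal_span_singleton_smul]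
  constructor
  · intro h
    obtain ⟨b, -, hb⟩ := Set.mem_smul_set.mp h
    exact ⟨b, hb⟩
  · rintro ⟨b, rfl⟩
    exact Submodule.smul_mem_pointwise_smul b s ⊤ trivial

lemma smulTop_le {R : Type} [CommRing R] {s t : R}
    (A : Type) [AddCommGroup A] [Module R A] (h : s ∣ t) :
    smulTop R t A ≤ smulTop R s A :=
  Submodule.smul_mono (Ideal.span_singleton_le_span_singleton.mpr h) le_rfl

lemma comap_mkQ_smulTop {R : Type} [CommRing R]
    {B : Type} [AddCommGroup B] [Module R B] (N : Submodule R B) (s : R) :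
    (smulTop R s (B ⧸ N)).comap N.mkQ = N ⊔ smulTop R s B := by
  have h1 : smulTop R s (B ⧸ N) = (smulTop R s B).map N.mkQ := by
    rw [smulTop, smulTop, Submodule.map_smul'', Submodule.map_top, Submodule.range_mkQ]
  rw [h1, Submodule.comap_map_eq, Submodule.ker_mkQ, sup_comm]

end Helpers

section Helpers2
variable (R : Type) [CommRing R] (S : Submonoid R)
variable (A B : Type) [AddCommGroup A] [Module R A] [AddCommGroup B] [Module R B]

lemma transMap_mk (s t : R) (h : s ∣ t) (a : A) :
    transMap R A s t h (Submodule.Quotient.mk a) = Submodule.Quotient.mk a := by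
  simp [transMap, Submodule.mapQ_apply]

lemma quotMapF_mk (f : A →ₗ[R] B) (s : R) (a : A) :
    quotMapF R A B f s (Submodule.Quotient.mk a) = Submodule.Quotient.mk (f a) := by
  simp [quotMapF, Submodule.mapQ_apply]

lemma lamMap_coe (b : B) (u : S) :
    ((lamMap R S B b : sCompletion R S B) : ∀ s : S, B ⧸ smulTop R (s : R) B) u
      = Submodule.Quotient.mk b := rfl

lemma sCompletionMap_coe (f : A →ₗ[R] B) (x : sCompletion R S A) (u : S) :
    ((sCompletionMap R S A B f x : sCompletion R S B) : ∀ s : S, B ⧸ smulTop R (s : R) B) u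
      = quotMapF R A B f (u : R) ((x : ∀ s : S, A ⧸ smulTop R (s : R) A) u) := rfl

lemma mem_torsion'_iff_exists (x : B) :
    x ∈ Submodule.torsion' R B S ↔ ∃ a : S, (a : R) • x = 0 := Iff.rfl

/-- Key lemma: if `r` kills the `S`-torsion, then torsion elements in `(r*t)B` vanish. -/
lemma star_lemma (r : S) (hr : ∀ x ∈ Submodule.torsion' R B S, (r : R) • x = 0)
    (t : S) {x : B} (hx : x ∈ Submodule.torsion' R B S)
    (hm : x ∈ smulTop R ((r : R) * (t : R)) B) : x = 0 := by
  obtain ⟨b, rfl⟩ := mem_smulTop.mp hm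
  obtain ⟨s, hs⟩ := (mem_torsion'_iff_exists R S B _).mp hx
  have hb : b ∈ Submodule.torsion' R B S := by
    refine (mem_torsion'_iff_exists R S B _).mpr ⟨s * r * t, ?_⟩
    have hc : ((s * r * t : S) : R) = (s : R) * ((r : R) * (t : R)) := by
      push_cast; ring
    rw [hc, mul_smul, hs]
  have hrb : (r : R) • b = 0 := hr b hb
  rw [mul_comm, mul_smul, hrb, smul_zero]

lemma star_unique (r : S) (hr : ∀ x ∈ Submodule.torsion' R B S, (r : R) • x = 0)
    (t : S) {γ γ' : B} (hγ : γ ∈ Submodule.torsion' R B S)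
    (hγ' : γ' ∈ Submodule.torsion' R B S)
    (h : γ - γ' ∈ smulTop R ((r : R) * (t : R)) B) : γ = γ' :=
  sub_eq_zero.mp (star_lemma R S B r hr t (sub_mem hγ hγ') h)

end Helpers2

/-- For an `R`-module `B` with bounded S-torsion:
(d) `λ_{S,B}` restricts to an isomorphism `Γ_S(B) ≅ Γ_S(Λ_S(B))`;
(e) there is a short exact sequence
`0 → Γ_S(B) → Λ_S(B) → Λ_S(B/Γ_S(B)) → 0`. -/
theorem sCompletion_bounded_torsion
    (R : Type) [CommRing R] (S : Submonoid R)
    (B : Type) [AddCommGroup B] [Module R B]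
    (hbdd : ∃ r : S, ∀ x ∈ Submodule.torsion' R B S, (r : R) • x = 0) :
    -- (d): `λ_{S,B}` is injective on `Γ_S(B)` and maps it onto `Γ_S(Λ_S(B))`
    ((∀ x ∈ Submodule.torsion' R B S, lamMap R S B x = 0 → x = 0) ∧
      Submodule.map (lamMap R S B) (Submodule.torsion' R B S)
        = Submodule.torsion' R (sCompletion R S B) S) ∧
    -- (e): `Λ_S(B) → Λ_S(B/Γ_S(B))` is surjective with kernel `Γ_S(B) ⊆ Λ_S(B)`
    (Function.Surjective
        (sCompletionMap R S B (B ⧸ Submodule.torsion' R B S)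
          (Submodule.torsion' R B S).mkQ) ∧
      LinearMap.ker
          (sCompletionMap R S B (B ⧸ Submodule.torsion' R B S)
            (Submodule.torsion' R B S).mkQ)
        = Submodule.map (lamMap R S B) (Submodule.torsion' R B S)) := by
  obtain ⟨r, hr⟩ := hbdd
  -- abbreviation
  set Γ := Submodule.torsion' R B S with hΓdef
  -- L1: if every component of `x` is represented by a torsion element, then `x ∈ λ(Γ)`.
  have L1 : ∀ x : sCompletion R S B,
      (∀ t : S, ∃ γ ∈ Γ, (x : ∀ s : S, B ⧸ smulTop R (s : R) B) t = Submodule.Quotient.mk γ) →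
      x ∈ Submodule.map (lamMap R S B) Γ := by
    intro x h
    choose γ hγΓ hγ using fun t : S => h (r * t)
    have hx2 := (mem_sCompletion R S B x.1).mp x.2
    have hconst : ∀ t : S, γ t = γ 1 := by
      intro t
      apply star_unique R S B r hr 1 (hγΓ t) (hγΓ 1)
      have h1 := hx2 (r * 1) (r * t) ⟨(t : R), by push_cast; ring⟩
      rw [hγ t, transMap_mk, hγ 1] at h1
      exact (Submodule.Quotient.eq _).mp h1
    refine ⟨γ 1, hγΓ 1, ?_⟩
    apply Subtype.ext; funext u
    have h2 := hx2 u (r * u) ⟨(r : R), by push_cast; ring⟩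
    rw [hγ u, transMap_mk, hconst u] at h2
    exact h2
  -- L2: components of a torsion element of the completion are represented by torsion elements.
  have L2 : ∀ x : sCompletion R S B, x ∈ Submodule.torsion' R (sCompletion R S B) S →
      ∀ t : S, ∃ γ ∈ Γ, (x : ∀ s : S, B ⧸ smulTop R (s : R) B) t = Submodule.Quotient.mk γ := by
    intro x hx t
    obtain ⟨s, hs⟩ := (mem_torsion'_iff_exists R S (sCompletion R S B) x).mp hx
    have hx2 := (mem_sCompletion R S B x.1).mp x.2
    obtain ⟨a, ha⟩ := Submodule.mkQ_surjective _ ((x : ∀ s : S, B ⧸ smulTop R (s : R) B) (s * t))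
    rw [Submodule.mkQ_apply] at ha
    have h0 : (s : R) • ((x : ∀ s : S, B ⧸ smulTop R (s : R) B) (s * t)) = 0 := by
      have := congrArg (fun z : sCompletion R S B =>
        (z : ∀ s : S, B ⧸ smulTop R (s : R) B) (s * t)) hs
      simpa using this
    rw [← ha, ← Submodule.Quotient.mk_smul, Submodule.Quotient.mk_eq_zero] at h0
    obtain ⟨c, hc⟩ := mem_smulTop.mp h0
    refine ⟨a - (t : R) • c, ?_, ?_⟩
    · refine (mem_torsion'_iff_exists R S B _).mpr ⟨s, ?_⟩
      rw [smul_sub, ← mul_smul]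
      have hc2 : ((s : R) * (t : R)) • c = (s : R) • a := by
        have : ((s * t : S) : R) • c = (s : R) • a := hc
        exact this
      rw [hc2, sub_self]
    · have h2 := hx2 t (s * t) ⟨(s : R), by push_cast; ring⟩
      rw [← ha, transMap_mk] at h2
      rw [← h2, Submodule.Quotient.eq]
      have : a - (a - (t : R) • c) = (t : R) • c := by abel
      rw [this]
      exact mem_smulTop.mpr ⟨c, rfl⟩
  -- L3: components of elements of the kernel are represented by torsion elements.
  have L3 : ∀ x : sCompletion R S B,
      sCompletionMap R S B (B ⧸ Γ) Γ.mkQ x = 0 →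
      ∀ t : S, ∃ γ ∈ Γ, (x : ∀ s : S, B ⧸ smulTop R (s : R) B) t = Submodule.Quotient.mk γ := by
    intro x hx t
    obtain ⟨a, ha⟩ := Submodule.mkQ_surjective _ ((x : ∀ s : S, B ⧸ smulTop R (s : R) B) t)
    rw [Submodule.mkQ_apply] at ha
    have h0 : quotMapF R B (B ⧸ Γ) Γ.mkQ (t : R)
        ((x : ∀ s : S, B ⧸ smulTop R (s : R) B) t) = 0 := by
      have := congrArg (fun z : sCompletion R S (B ⧸ Γ) =>
        (z : ∀ s : S, (B ⧸ Γ) ⧸ smulTop R (s : R) (B ⧸ Γ)) t) hx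
      simpa [sCompletionMap_coe] using this
    rw [← ha, quotMapF_mk, Submodule.Quotient.mk_eq_zero] at h0
    have hmem : a ∈ Γ ⊔ smulTop R (t : R) B := by
      rw [← comap_mkQ_smulTop Γ (t : R)]
      exact h0
    obtain ⟨γ, hγ, m, hm, hsum⟩ := Submodule.mem_sup.mp hmem
    refine ⟨γ, hγ, ?_⟩
    rw [← ha, Submodule.Quotient.eq]
    have : a - γ = m := by rw [← hsum]; abel
    rw [this]; exact hm
  -- λ(Γ) consists of torsion elements
  have hsub : Submodule.map (lamMap R S B) Γ ≤ Submodule.torsion' R (sCompletion R S B) S := by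
    rintro _ ⟨v, hv, rfl⟩
    obtain ⟨s, hs⟩ := (mem_torsion'_iff_exists R S B v).mp hv
    refine (mem_torsion'_iff_exists R S (sCompletion R S B) _).mpr ⟨s, ?_⟩
    rw [← map_smul, hs, map_zero]
  constructor
  · constructor
    · -- (d1) injectivity on torsion
      intro x hx h0
      have hcomp : (Submodule.Quotient.mk x : B ⧸ smulTop R (r : R) B) = 0 := by
        have := congrArg (fun z : sCompletion R S B =>
          (z : ∀ s : S, B ⧸ smulTop R (s : R) B) r) h0
        simpa [lamMap_coe] using this
      rw [Submodule.Quotient.mk_eq_zero] at hcomp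
      refine star_lemma R S B r hr 1 hx ?_
      simpa using hcomp
    · -- (d2)
      refine le_antisymm hsub ?_
      intro x hx
      exact L1 x (L2 x hx)
  · constructor
    · -- (e) surjectivity
      intro y
      have hy2 := (mem_sCompletion R S (B ⧸ Γ) y.1).mp y.2
      have hbex : ∀ u : S, ∃ v : B,
          (Submodule.Quotient.mk (Γ.mkQ v) : (B ⧸ Γ) ⧸ smulTop R (u : R) (B ⧸ Γ))
            = (y : ∀ s : S, (B ⧸ Γ) ⧸ smulTop R (s : R) (B ⧸ Γ)) u := by
        intro u
        obtain ⟨z, hz⟩ := Submodule.mkQ_surjective _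
          ((y : ∀ s : S, (B ⧸ Γ) ⧸ smulTop R (s : R) (B ⧸ Γ)) u)
        obtain ⟨v, hvz⟩ := Submodule.mkQ_surjective Γ z
        exact ⟨v, by rw [hvz, ← Submodule.mkQ_apply, hz]⟩
      choose b hb using hbex
      have hone : ∀ u : S, ((1 : S) : R) ∣ (u : R) := fun u => ⟨(u : R), by push_cast; ring⟩
      have hdec : ∀ (u u' : S) (h : (u : R) ∣ (u' : R)),
          ∃ γ ∈ Γ, b (r * u') - b (r * u) - γ ∈ smulTop R ((r : R) * (u : R)) B := by
        intro u u' h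
        have h2 := hy2 (r * u) (r * u') (mul_dvd_mul_left (r : R) h)
        rw [← hb (r * u'), transMap_mk, ← hb (r * u)] at h2
        have h3 : Γ.mkQ (b (r * u') - b (r * u))
            ∈ smulTop R ((r : R) * (u : R)) (B ⧸ Γ) := by
          rw [map_sub]
          exact (Submodule.Quotient.eq _).mp h2
        have h4 : b (r * u') - b (r * u) ∈ Γ ⊔ smulTop R ((r : R) * (u : R)) B := by
          rw [← comap_mkQ_smulTop Γ]
          exact h3
        obtain ⟨γ, hγ, m, hm, hsum⟩ := Submodule.mem_sup.mp h4
        refine ⟨γ, hγ, ?_⟩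
        have : b (r * u') - b (r * u) - γ = m := by rw [← hsum]; abel
        rw [this]; exact hm
      choose γc hγΓ hγm using hdec
      have hco : ∀ (u u' : S) (h : (u : R) ∣ (u' : R)),
          γc 1 u' (hone u') = γc 1 u (hone u) + γc u u' h := by
        intro u u' h
        apply star_unique R S B r hr 1 (hγΓ 1 u' (hone u'))
          (add_mem (hγΓ 1 u (hone u)) (hγΓ u u' h))
        have hA := hγm u u' h
        have hB := hγm 1 u (hone u)
        have hC := hγm 1 u' (hone u')
        have hA' : b (r * u') - b (r * u) - γc u u' h
            ∈ smulTop R ((r : R) * ((1 : S) : R)) B :=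
          smulTop_le B ⟨(u : R), by push_cast; ring⟩ hA
        have hX : γc 1 u' (hone u') - (γc 1 u (hone u) + γc u u' h)
            = (b (r * u') - b (r * u) - γc u u' h)
              + (b (r * u) - b (r * 1) - γc 1 u (hone u))
              - (b (r * u') - b (r * 1) - γc 1 u' (hone u')) := by abel
        rw [hX]
        exact sub_mem (add_mem hA' hB) hC
      have hxmem : (fun u : S => (Submodule.Quotient.mk (b (r * u) - γc 1 u (hone u)) :
          B ⧸ smulTop R (u : R) B)) ∈ sCompletion R S B := by
        intro u u' h
        rw [transMap_mk, Submodule.Quotient.eq]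
        have heq : (b (r * u') - γc 1 u' (hone u')) - (b (r * u) - γc 1 u (hone u))
            = b (r * u') - b (r * u) - γc u u' h := by
          rw [hco u u' h]; abel
        rw [heq]
        exact smulTop_le B ⟨(r : R), by ring⟩ (hγm u u' h)
      refine ⟨⟨_, hxmem⟩, ?_⟩
      apply Subtype.ext; funext u
      have hgoal : quotMapF R B (B ⧸ Γ) Γ.mkQ (u : R)
          ((Submodule.Quotient.mk (b (r * u) - γc 1 u (hone u)) :
            B ⧸ smulTop R (u : R) B))
          = (y : ∀ s : S, (B ⧸ Γ) ⧸ smulTop R (s : R) (B ⧸ Γ)) u := by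
        rw [quotMapF_mk]
        have h2 := hy2 u (r * u) ⟨(r : R), by push_cast; ring⟩
        rw [← hb (r * u), transMap_mk] at h2
        rw [← h2]
        congr 1
        rw [map_sub]
        have hz : Γ.mkQ (γc 1 u (hone u)) = 0 := by
          rw [Submodule.mkQ_apply, Submodule.Quotient.mk_eq_zero]
          exact hγΓ 1 u (hone u)
        rw [hz, sub_zero]
      exact hgoal
    · -- (e) kernel
      apply le_antisymm
      · intro x hx
        rw [LinearMap.mem_ker] at hx
        exact L1 x (L3 x hx)
      · rintro _ ⟨v, hv, rfl⟩
        rw [LinearMap.mem_ker]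
        apply Subtype.ext; funext u
        have hz : quotMapF R B (B ⧸ Γ) Γ.mkQ (u : R)
            ((Submodule.Quotient.mk v : B ⧸ smulTop R (u : R) B))
            = 0 := by
          rw [quotMapF_mk]
          have : Γ.mkQ v = 0 := by
            rw [Submodule.mkQ_apply, Submodule.Quotient.mk_eq_zero]; exact hv
          rw [this]
          simp
        simpa [sCompletionMap_coe, lamMap_coe] using hz
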